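/- Let d(u,v) = min(|u−v|, 1−|u−v|) denote the periodic distance on [0,1]. Suppose 0 ≤ r_d ≤ r_s ≤ 2r_d and r_s ≤ 1/4. Then for every x ∈ [0,1], the integral over (y,z) ∈ [0,1]² (with respect to Lebesgue measure) of 1[d(y,z) ≤ r_s]·1[d(x,y) ≤ r_d]·1[d(x,z) ≤ r_d] equals 4 r_s r_d − r_s². (This is the mixed-triangle probability in the geometric block model conditioned on the location of the vertex whose community differs from the other two, in the regime r_d ≤ r_s < 2r_d.) -/

import Mathlib

open MeasureTheory

noncomputable section

/-- The periodic distance on `[0,1]`: `d(u,v) = min(|u-v|, 1-|u-v|)`. -/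
def pdist (u v : ℝ) : ℝ := min |u - v| (1 - |u - v|)

def indc (r t : ℝ) : ℝ := if min (Int.fract t) (1 - Int.fract t) ≤ r then 1 else 0

lemma fract_of_neg {t : ℝ} (h0 : -1 ≤ t) (h1 : t < 0) : Int.fract t = t + 1 := by
  have := Int.fract_add_intCast t 1
  push_cast at this
  rw [← this, Int.fract_eq_self.mpr ⟨by linarith, by linarith⟩]

lemma d0_eq_of_mem {t : ℝ} (h : t ∈ Set.Icc (-1:ℝ) 1) :
    min (Int.fract t) (1 - Int.fract t) = min |t| (1 - |t|) := by
  obtain ⟨h0, h1⟩ := h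
  rcases lt_trichotomy t 0 with h | h | h
  · rw [fract_of_neg h0 h, abs_of_neg h, min_comm]
    ring_nf
  · simp [h, Int.fract_zero]
  · rcases eq_or_lt_of_le h1 with rfl | h1
    · norm_num [Int.fract_one]
    · rw [Int.fract_eq_self.mpr ⟨h.le, h1⟩, abs_of_pos h]

lemma d0_eq_abs {t : ℝ} (h : |t| ≤ 1/2) :
    min (Int.fract t) (1 - Int.fract t) = |t| := by
  rw [d0_eq_of_mem ⟨by cases abs_le.mp h; linarith, by cases abs_le.mp h; linarith⟩]
  exact min_eq_left (by linarith)

lemma indc_eq_pdist {r u v : ℝ} (hu : u ∈ Set.Icc (0:ℝ) 1) (hv : v ∈ Set.Icc (0:ℝ) 1) :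
    (if pdist u v ≤ r then (1:ℝ) else 0) = indc r (u - v) := by
  obtain ⟨hu0, hu1⟩ := hu; obtain ⟨hv0, hv1⟩ := hv
  rw [indc, d0_eq_of_mem ⟨by linarith, by linarith⟩, pdist]

lemma indc_periodic (r : ℝ) : Function.Periodic (indc r) 1 := by
  intro t
  simp only [indc]
  have := Int.fract_add_intCast t 1
  push_cast at this
  rw [this]

lemma indc_add_one (r s : ℝ) : indc r (s + 1) = indc r s := indc_periodic r s

lemma indc_sub_one (r s : ℝ) : indc r (s - 1) = indc r s := by
  simpa using (indc_periodic r (s - 1)).symm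

lemma measurable_indc (r : ℝ) : Measurable (indc r) := by
  unfold indc
  exact Measurable.ite
    (measurableSet_le ((measurable_fract).min (measurable_const.sub measurable_fract))
      measurable_const) measurable_const measurable_const

lemma indc_nonneg (r t : ℝ) : 0 ≤ indc r t := by unfold indc; positivity

lemma indc_le_one (r t : ℝ) : indc r t ≤ 1 := by
  unfold indc; split <;> norm_num

lemma shift_int (f : ℝ → ℝ) (hf : Function.Periodic f 1) (c : ℝ) :
    (∫ v in (0:ℝ)..1, f (c - v)) = ∫ z in (0:ℝ)..1, f z := by
  rw [intervalIntegral.integral_comp_sub_left]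
  have := hf.intervalIntegral_add_eq (c-1) 0
  simpa using this

lemma int_linear (p q C : ℝ) : (∫ u in p..q, (u + C)) = (q^2 - p^2)/2 + (q - p)*C := by
  have : (∫ u in p..q, (u + C)) = (∫ u in p..q, u) + ∫ _ in p..q, C :=
    intervalIntegral.integral_add (continuous_id.intervalIntegrable _ _) intervalIntegrable_const
  rw [this, integral_id, intervalIntegral.integral_const, smul_eq_mul]
  try ring

lemma final_integral (rs rd : ℝ) (hrd0 : 0 ≤ rd) (hds : rd ≤ rs) (hs2d : rs ≤ 2*rd) :
    (∫ u in (1/2-rd : ℝ)..(1/2+rd), (min (u+rs) (1/2+rd) - max (u-rs) (1/2-rd)))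
      = 4*rs*rd - rs^2 := by
  have hrs0 : 0 ≤ rs := le_trans hrd0 hds
  set a : ℝ := 1/2 - rd with ha
  set c : ℝ := 1/2 + rd with hc
  have hac : a ≤ c := by simp [ha, hc]; linarith
  have h1 : a ≤ c - rs := by simp [ha, hc]; linarith
  have h2 : c - rs ≤ c := by linarith
  have h3 : a ≤ a + rs := by linarith
  have h4 : a + rs ≤ c := by simp [ha, hc]; linarith
  have cmin : Continuous fun u : ℝ => min (u+rs) c := by continuity
  have cmax : Continuous fun u : ℝ => max (u-rs) a := by continuity
  rw [intervalIntegral.integral_sub (cmin.intervalIntegrable _ _) (cmax.intervalIntegrable _ _)]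
  have emin : (∫ u in a..c, min (u+rs) c) = (c-rs)^2/2 - a^2/2 + (c-rs-a)*rs + rs*c := by
    rw [← intervalIntegral.integral_add_adjacent_intervals
        (cmin.intervalIntegrable a (c-rs)) (cmin.intervalIntegrable (c-rs) c)]
    have e1 : (∫ u in a..(c-rs), min (u+rs) c) = ∫ u in a..(c-rs), (u + rs) := by
      apply intervalIntegral.integral_congr
      intro u hu
      rw [Set.uIcc_of_le h1] at hu
      exact min_eq_left (by linarith [hu.2])
    have e2 : (∫ u in (c-rs)..c, min (u+rs) c) = ∫ u in (c-rs)..c, (c:ℝ) := by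
      apply intervalIntegral.integral_congr
      intro u hu
      rw [Set.uIcc_of_le h2] at hu
      exact min_eq_right (by linarith [hu.1])
    rw [e1, e2, int_linear, intervalIntegral.integral_const, smul_eq_mul]
    ring
  have emax : (∫ u in a..c, max (u-rs) a) = rs*a + (c^2/2 - (a+rs)^2/2 - (c-a-rs)*rs) := by
    rw [← intervalIntegral.integral_add_adjacent_intervals
        (cmax.intervalIntegrable a (a+rs)) (cmax.intervalIntegrable (a+rs) c)]
    have e1 : (∫ u in a..(a+rs), max (u-rs) a) = ∫ u in a..(a+rs), (a:ℝ) := by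
      apply intervalIntegral.integral_congr
      intro u hu
      rw [Set.uIcc_of_le h3] at hu
      exact max_eq_right (by linarith [hu.2])
    have e2 : (∫ u in (a+rs)..c, max (u-rs) a) = ∫ u in (a+rs)..c, (u + (-rs)) := by
      apply intervalIntegral.integral_congr
      intro u hu
      rw [Set.uIcc_of_le h4] at hu
      have h : max (u-rs) a = u - rs := max_eq_left (by linarith [hu.1])
      simp only []
      rw [h]; ring
    rw [e1, e2, int_linear, intervalIntegral.integral_const, smul_eq_mul]
    ring
  rw [emin, emax, ha, hc]
  ring

lemma icc_to_ii (f : ℝ → ℝ) : (∫ t in Set.Icc (0:ℝ) 1, f t) = ∫ t in (0:ℝ)..1, f t := by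
  rw [intervalIntegral.integral_of_le zero_le_one, integral_Icc_eq_integral_Ioc]

theorem mixed_triangle_prob_diff_vertex (rs rd : ℝ) (hrd0 : 0 ≤ rd)
    (hds : rd ≤ rs) (hs2d : rs ≤ 2 * rd) (hs4 : rs ≤ 1 / 4)
    (x : ℝ) (hx : x ∈ Set.Icc (0 : ℝ) 1) :
    (∫ p in Set.Icc (0 : ℝ) 1 ×ˢ Set.Icc (0 : ℝ) 1,
        (if pdist p.1 p.2 ≤ rs then (1 : ℝ) else 0) *
        (if pdist x p.1 ≤ rd then (1 : ℝ) else 0) *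
        (if pdist x p.2 ≤ rd then (1 : ℝ) else 0)) = 4 * rs * rd - rs ^ 2 := by
  have hrs0 : 0 ≤ rs := le_trans hrd0 hds
  have hrd4 : rd ≤ 1/4 := le_trans hds hs4
  set G : ℝ × ℝ → ℝ := fun p => indc rs (p.1 - p.2) * indc rd (x - p.1) * indc rd (x - p.2)
    with hG
  have hGmeas : Measurable G := by
    apply Measurable.mul
    apply Measurable.mul
    · exact (measurable_indc rs).comp (measurable_fst.sub measurable_snd)
    · exact (measurable_indc rd).comp (measurable_const.sub measurable_fst)
    · exact (measurable_indc rd).comp (measurable_const.sub measurable_snd)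
  have stepA : (∫ p in Set.Icc (0 : ℝ) 1 ×ˢ Set.Icc (0 : ℝ) 1,
        (if pdist p.1 p.2 ≤ rs then (1 : ℝ) else 0) *
        (if pdist x p.1 ≤ rd then (1 : ℝ) else 0) *
        (if pdist x p.2 ≤ rd then (1 : ℝ) else 0))
      = ∫ p in Set.Icc (0 : ℝ) 1 ×ˢ Set.Icc (0 : ℝ) 1, G p := by
    apply setIntegral_congr_fun (measurableSet_Icc.prod measurableSet_Icc)
    intro p hp
    obtain ⟨h1, h2⟩ := hp
    rw [hG]
    simp only []
    rw [indc_eq_pdist h1 h2, indc_eq_pdist hx h1, indc_eq_pdist hx h2]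
  rw [stepA]
  have hInt : IntegrableOn G (Set.Icc (0 : ℝ) 1 ×ˢ Set.Icc (0 : ℝ) 1)
      ((volume : Measure ℝ).prod volume) := by
    apply Measure.integrableOn_of_bounded (M := 1)
    · rw [← Measure.volume_eq_prod]
      exact ((isCompact_Icc.prod isCompact_Icc).measure_lt_top).ne
    · exact hGmeas.aestronglyMeasurable
    · filter_upwards with p
      rw [hG]
      simp only [Real.norm_eq_abs]
      rw [abs_of_nonneg (mul_nonneg (mul_nonneg (indc_nonneg _ _) (indc_nonneg _ _))
        (indc_nonneg _ _))]
      exact mul_le_one₀ (mul_le_one₀ (indc_le_one _ _) (indc_nonneg _ _) (indc_le_one _ _))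
        (indc_nonneg _ _) (indc_le_one _ _)
  rw [Measure.volume_eq_prod, setIntegral_prod G hInt]
  simp only [hG]
  rw [icc_to_ii]
  have inner_icc : ∀ y : ℝ, (∫ z in Set.Icc (0:ℝ) 1,
      indc rs (y - z) * indc rd (x - y) * indc rd (x - z)) = ∫ z in (0:ℝ)..1,
      indc rs (y - z) * indc rd (x - y) * indc rd (x - z) := fun y => icc_to_ii _
  simp only [inner_icc]
  have step1 : ∀ y : ℝ, (∫ z in (0:ℝ)..1, indc rs (y-z) * indc rd (x-y) * indc rd (x-z))
      = indc rd (x-y) * ∫ z in (0:ℝ)..1, indc rs (y-z) * indc rd (x-z) := by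
    intro y
    rw [← intervalIntegral.integral_const_mul]
    apply intervalIntegral.integral_congr
    intro z _
    simp only []
    ring
  have step2 : ∀ y : ℝ, (∫ z in (0:ℝ)..1, indc rs (y-z) * indc rd (x-z))
      = ∫ v in (0:ℝ)..1, indc rs (y-x-1/2+v) * indc rd (v-1/2) := by
    intro y
    have hper : Function.Periodic (fun z => indc rs (y-z) * indc rd (x-z)) 1 := by
      intro t
      simp only []
      rw [show y-(t+1) = (y-t) - 1 by ring, show x-(t+1) = (x-t) - 1 by ring,
        indc_sub_one, indc_sub_one]
    rw [← shift_int _ hper (x+1/2)]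
    apply intervalIntegral.integral_congr
    intro v _
    simp only []
    rw [show y-(x+1/2-v) = y-x-1/2+v by ring, show x-(x+1/2-v) = v-1/2 by ring]
  have step3 : (∫ y in (0:ℝ)..1,
        indc rd (x-y) * ∫ v in (0:ℝ)..1, indc rs (y-x-1/2+v) * indc rd (v-1/2))
      = ∫ u in (0:ℝ)..1, indc rd (u-1/2) * ∫ v in (0:ℝ)..1, indc rs (v-u) * indc rd (v-1/2) := by
    have hper : Function.Periodic
        (fun y => indc rd (x-y) * ∫ v in (0:ℝ)..1, indc rs (y-x-1/2+v) * indc rd (v-1/2)) 1 := by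
      intro t
      simp only []
      rw [show x-(t+1) = (x-t)-1 by ring, indc_sub_one]
      congr 1
      apply intervalIntegral.integral_congr
      intro v _
      simp only []
      rw [show t+1-x-1/2+v = (t-x-1/2+v)+1 by ring, indc_add_one]
    rw [← shift_int _ hper (x+1/2)]
    apply intervalIntegral.integral_congr
    intro u _
    simp only []
    rw [show x-(x+1/2-u) = u-1/2 by ring]
    congr 1
    apply intervalIntegral.integral_congr
    intro v _
    simp only []
    rw [show (x+1/2-u)-x-1/2+v = v-u by ring]
  simp only [step1, step2]
  rw [step3]
  -- inner integral computation
  have inner_eq : ∀ u ∈ Set.Icc (1/2 - rd) (1/2 + rd),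
      (∫ v in (0:ℝ)..1, indc rs (v-u) * indc rd (v-1/2))
        = min (u+rs) (1/2+rd) - max (u-rs) (1/2-rd) := by
    intro u hu
    obtain ⟨hu1, hu2⟩ := hu
    set A := max (u-rs) (1/2-rd) with hA
    set B := min (u+rs) (1/2+rd) with hB
    have hAB : A ≤ B :=
      max_le (le_min (by linarith) (by linarith)) (le_min (by linarith) (by linarith))
    have hA0 : (0:ℝ) < A := lt_of_lt_of_le (by linarith) (le_max_right _ _)
    have hB1 : B ≤ 1 := le_trans (min_le_right _ _) (by linarith)
    have hcong : Set.EqOn (fun v => indc rs (v-u) * indc rd (v-1/2))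
        (fun v => Set.indicator (Set.Icc A B) (fun _ => (1:ℝ)) v) (Set.uIcc (0:ℝ) 1) := by
      intro v hv
      rw [Set.uIcc_of_le zero_le_one] at hv
      obtain ⟨hv0, hv1⟩ := hv
      have hv2 : |v - 1/2| ≤ 1/2 := abs_le.mpr ⟨by linarith, by linarith⟩
      have hd : indc rd (v-1/2) = if |v-1/2| ≤ rd then 1 else 0 := by
        rw [indc, d0_eq_abs hv2]
      simp only []
      by_cases hcase : |v - 1/2| ≤ rd
      · obtain ⟨hw1, hw2⟩ := abs_le.mp hcase
        have hvu : |v - u| ≤ 1/2 := abs_le.mpr ⟨by linarith, by linarith⟩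
        have hs : indc rs (v-u) = if |v-u| ≤ rs then 1 else 0 := by
          rw [indc, d0_eq_abs hvu]
        rw [hd, hs, if_pos hcase, mul_one]
        by_cases h2 : |v - u| ≤ rs
        · obtain ⟨hx1, hx2⟩ := abs_le.mp h2
          rw [if_pos h2, Set.indicator_of_mem]
          exact ⟨max_le (by linarith) (by linarith), le_min (by linarith) (by linarith)⟩
        · rw [if_neg h2, Set.indicator_of_notMem]
          intro hmem
          obtain ⟨hm1, hm2⟩ := hmem
          exact h2 (abs_le.mpr ⟨by linarith [le_trans (le_max_left (u-rs) (1/2-rd)) hm1],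
            by linarith [le_trans hm2 (min_le_left (u+rs) (1/2+rd))]⟩)
      · rw [hd, if_neg hcase, mul_zero]
        rw [Set.indicator_of_notMem]
        intro hmem
        obtain ⟨hm1, hm2⟩ := hmem
        exact hcase (abs_le.mpr ⟨by linarith [le_trans (le_max_right (u-rs) (1/2-rd)) hm1],
          by linarith [le_trans hm2 (min_le_right (u+rs) (1/2+rd))]⟩)
    rw [intervalIntegral.integral_congr hcong, intervalIntegral.integral_of_le zero_le_one,
      setIntegral_indicator measurableSet_Icc]
    have hsub : Set.Ioc (0:ℝ) 1 ∩ Set.Icc A B = Set.Icc A B := by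
      apply Set.inter_eq_right.mpr
      intro t ht
      exact ⟨lt_of_lt_of_le hA0 ht.1, le_trans ht.2 hB1⟩
    rw [hsub]
    simp [Real.volume_Icc, ENNReal.toReal_ofReal (by linarith : (0:ℝ) ≤ B - A), hAB]
  -- outer
  have outer_cong : Set.EqOn
      (fun u => indc rd (u-1/2) * ∫ v in (0:ℝ)..1, indc rs (v-u) * indc rd (v-1/2))
      (fun u => Set.indicator (Set.Icc (1/2-rd) (1/2+rd))
        (fun u => min (u+rs) (1/2+rd) - max (u-rs) (1/2-rd)) u) (Set.uIcc (0:ℝ) 1) := by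
    intro u hu
    rw [Set.uIcc_of_le zero_le_one] at hu
    obtain ⟨hu0, hu1⟩ := hu
    have hu2 : |u - 1/2| ≤ 1/2 := abs_le.mpr ⟨by linarith, by linarith⟩
    have hd : indc rd (u-1/2) = if |u-1/2| ≤ rd then 1 else 0 := by
      rw [indc, d0_eq_abs hu2]
    simp only []
    by_cases hcase : |u-1/2| ≤ rd
    · obtain ⟨hw1, hw2⟩ := abs_le.mp hcase
      have humem : u ∈ Set.Icc (1/2-rd) (1/2+rd) := ⟨by linarith, by linarith⟩
      rw [hd, if_pos hcase, one_mul, inner_eq u humem, Set.indicator_of_mem humem]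
    · rw [hd, if_neg hcase, zero_mul, Set.indicator_of_notMem]
      intro hmem
      exact hcase (abs_le.mpr ⟨by linarith [hmem.1], by linarith [hmem.2]⟩)
  rw [intervalIntegral.integral_congr outer_cong, intervalIntegral.integral_of_le zero_le_one,
    setIntegral_indicator measurableSet_Icc]
  have hsub : Set.Ioc (0:ℝ) 1 ∩ Set.Icc (1/2-rd) (1/2+rd) = Set.Icc (1/2-rd) (1/2+rd) := by
    apply Set.inter_eq_right.mpr
    intro t ht
    exact ⟨by linarith [ht.1], by linarith [ht.2]⟩
  rw [hsub, integral_Icc_eq_integral_Ioc,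
    ← intervalIntegral.integral_of_le (by linarith : (1/2-rd:ℝ) ≤ 1/2+rd)]
  have := final_integral rs rd hrd0 hds hs2d
  linarith [this]
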